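/- Let L = sl₂(F) over a field F of characteristic not 2, with standard basis h, x, y ([h,x]=2x, [h,y]=−2y, [x,y]=h). Then the two-dimensional Lie subalgebras of L are exactly B = Fx + Fh and B(α) = F(h + αx) + F(y + (α²/4)x) for α ∈ F. In particular, over F_q (q odd) there are exactly q+1 two-dimensional subalgebras. -/

import Mathlib

open Module

section aux
variable {F : Type*} [Field F] {L : Type*} [LieRing L] [LieAlgebra F L]

lemma lie_span_pair_closed {a b : L} (hab : ⁅a, b⁆ ∈ Submodule.span F {a, b}) :
    ∀ u ∈ Submodule.span F ({a, b} : Set L), ∀ v ∈ Submodule.span F ({a, b} : Set L),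
      ⁅u, v⁆ ∈ Submodule.span F ({a, b} : Set L) := by
  intro u hu v hv
  obtain ⟨s, t, rfl⟩ := Submodule.mem_span_pair.mp hu
  obtain ⟨s', t', rfl⟩ := Submodule.mem_span_pair.mp hv
  have key : ⁅s • a + t • b, s' • a + t' • b⁆ = (s * t' - t * s') • ⁅a, b⁆ := by
    simp only [add_lie, lie_add, smul_lie, lie_smul, lie_self, smul_zero, zero_add, add_zero]
    rw [← lie_skew a b]
    module
  rw [key]
  exact Submodule.smul_mem _ _ hab

lemma finrank_span_pair_eq_two {v w : L} (hli : LinearIndependent F ![v, w]) :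
    finrank F (Submodule.span F ({v, w} : Set L)) = 2 := by
  have hr : Set.range ![v, w] = ({v, w} : Set L) := by
    ext z; simp [Fin.exists_fin_two, or_comm]
  rw [← hr, finrank_span_eq_card hli]
  simp
end aux

theorem sl2_two_dim_subalgebras
    (F : Type*) [Field F] (hchar : (2 : F) ≠ 0)
    (L : Type*) [LieRing L] [LieAlgebra F L]
    (x y h : L) (hspan : Submodule.span F {x, y, h} = ⊤)
    (hdim : finrank F L = 3)
    (hhx : ⁅h, x⁆ = (2 : F) • x) (hhy : ⁅h, y⁆ = -(2 : F) • y)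
    (hxy : ⁅x, y⁆ = h) :
    (∀ U : LieSubalgebra F L, finrank F U = 2 ↔
        ((U : Submodule F L) = Submodule.span F {x, h} ∨
          ∃ α : F, (U : Submodule F L) =
            Submodule.span F {h + α • x, y + (α ^ 2 / 4) • x})) ∧
    (∀ q : ℕ, Odd q → Nat.card F = q →
        Nat.card {U : LieSubalgebra F L // finrank F U = 2} = q + 1) := by
  classical
  have h4 : (4 : F) ≠ 0 := by
    have := mul_ne_zero hchar hchar
    norm_num at this
    exact_mod_cast this
  -- basis
  have hrange : Set.range ![x, y, h] = ({x, y, h} : Set L) := by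
    simp only [Matrix.range_cons, Matrix.range_empty, Set.union_empty]
    ext z
    simp
    tauto
  have hspan' : ⊤ ≤ Submodule.span F (Set.range ![x, y, h]) := by
    rw [hrange, hspan]
  have hcard3 : Fintype.card (Fin 3) = finrank F L := by simp [hdim]
  let b : Basis (Fin 3) F L := basisOfTopLeSpanOfCardEqFinrank ![x, y, h] hspan' hcard3
  have hb : ⇑b = ![x, y, h] := coe_basisOfTopLeSpanOfCardEqFinrank _ _ _
  have hFD : FiniteDimensional F L := Module.Finite.of_basis b
  have hli3 : LinearIndependent F ![x, y, h] := hb ▸ b.linearIndependent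
  have hcoeff : ∀ a c d : F, a • x + c • y + d • h = 0 → a = 0 ∧ c = 0 ∧ d = 0 := by
    intro a c d hacd
    have hz := Fintype.linearIndependent_iff.mp hli3 ![a, c, d] ?_
    · exact ⟨hz 0, hz 1, hz 2⟩
    · rw [Fin.sum_univ_three]
      simpa using hacd
  -- coordinates
  have hπ : ∀ i j : Fin 3, b.coord i (![x, y, h] j) = if j = i then 1 else 0 := by
    intro i j
    rw [← hb]
    simp [Basis.coord_apply, Basis.repr_self, Finsupp.single_apply]
  have c0x : b.coord 0 x = 1 := by simpa using hπ 0 0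
  have c0y : b.coord 0 y = 0 := by simpa using hπ 0 1
  have c0h : b.coord 0 h = 0 := by simpa using hπ 0 2
  have c1x : b.coord 1 x = 0 := by simpa using hπ 1 0
  have c1y : b.coord 1 y = 1 := by simpa using hπ 1 1
  have c1h : b.coord 1 h = 0 := by simpa using hπ 1 2
  have c2x : b.coord 2 x = 0 := by simpa using hπ 2 0
  have c2y : b.coord 2 y = 0 := by simpa using hπ 2 1
  have c2h : b.coord 2 h = 1 := by simpa using hπ 2 2
  have hexp : ∀ u : L, u = b.coord 0 u • x + b.coord 1 u • y + b.coord 2 u • h := by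
    intro u
    have hs := b.sum_repr u
    rw [Fin.sum_univ_three, hb] at hs
    simp only [Matrix.cons_val_zero, Matrix.cons_val_one, Matrix.head_cons,
      Matrix.cons_val_two, Matrix.tail_cons] at hs
    simp only [Basis.coord_apply]
    exact hs.symm
  -- derived bracket facts
  have hyx : ⁅y, x⁆ = -h := by rw [← lie_skew, hxy]
  have hxh : ⁅x, h⁆ = (-2 : F) • x := by rw [← lie_skew, hhx, neg_smul]
  have hyh : ⁅y, h⁆ = (2 : F) • y := by rw [← lie_skew, hhy]; simp
  -- finranks of candidates
  have hlixh : LinearIndependent F ![x, h] := by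
    rw [LinearIndependent.pair_iff]
    intro s t hst
    have := hcoeff s 0 t (by rw [← hst]; module)
    exact ⟨this.1, this.2.2⟩
  have hfrB : finrank F (Submodule.span F ({x, h} : Set L)) = 2 := finrank_span_pair_eq_two hlixh
  have hliBα : ∀ α : F, LinearIndependent F ![h + α • x, y + (α ^ 2 / 4) • x] := by
    intro α
    rw [LinearIndependent.pair_iff]
    intro s t hst
    have := hcoeff (s * α + t * (α ^ 2 / 4)) t s (by rw [← hst]; module)
    exact ⟨this.2.2, this.2.1⟩
  have hfrBα : ∀ α : F, finrank F
      (Submodule.span F ({h + α • x, y + (α ^ 2 / 4) • x} : Set L)) = 2 :=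
    fun α => finrank_span_pair_eq_two (hliBα α)
  -- the classification
  have hmain : ∀ U : LieSubalgebra F L, finrank F U = 2 ↔
      ((U : Submodule F L) = Submodule.span F {x, h} ∨
        ∃ α : F, (U : Submodule F L) =
          Submodule.span F {h + α • x, y + (α ^ 2 / 4) • x}) := by
    intro U
    have hUfr : finrank F U = finrank F (U : Submodule F L) := rfl
    constructor
    · intro hU2
      rw [hUfr] at hU2
      by_cases hcase : ∀ u ∈ U, b.coord 1 u = 0
      · -- U = span {x, h}
        left
        have hker2 : finrank F (LinearMap.ker (b.coord 1)) = 2 := by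
          have hsur : LinearMap.range (b.coord 1) = ⊤ := by
            rw [LinearMap.range_eq_top]
            intro c
            exact ⟨c • y, by simp [map_smul, c1y]⟩
          have hrn := LinearMap.finrank_range_add_finrank_ker (b.coord 1)
          rw [hsur, finrank_top, hdim, finrank_self] at hrn
          omega
        have hle1 : (U : Submodule F L) ≤ LinearMap.ker (b.coord 1) := by
          intro u hu
          exact LinearMap.mem_ker.mpr (hcase u hu)
        have hle2 : Submodule.span F ({x, h} : Set L) ≤ LinearMap.ker (b.coord 1) := by
          rw [Submodule.span_le]
          rintro z (rfl | rfl) <;> simp [LinearMap.mem_ker, c1x, c1h]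
        have e1 : (U : Submodule F L) = LinearMap.ker (b.coord 1) :=
          Submodule.eq_of_le_of_finrank_eq hle1 (by rw [hU2, hker2])
        have e2 : Submodule.span F ({x, h} : Set L) = LinearMap.ker (b.coord 1) :=
          Submodule.eq_of_le_of_finrank_eq hle2 (by rw [hfrB, hker2])
        rw [e1, e2]
      · push_neg at hcase
        obtain ⟨u0, hu0U, hu0⟩ := hcase
        set u' : L := (b.coord 1 u0)⁻¹ • u0 with hu'def
        have hu'U : u' ∈ U := U.smul_mem _ hu0U
        have hπu' : b.coord 1 u' = 1 := by
          rw [hu'def, map_smul, smul_eq_mul, inv_mul_cancel₀ hu0]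
        set r : F := b.coord 0 u' with hrdef
        set s : F := b.coord 2 u' with hsdef
        have hu'exp : u' = r • x + y + s • h := by
          have := hexp u'
          rwa [hπu', one_smul, ← hrdef, ← hsdef] at this
        -- find w ∈ U with coord 1 w = 0, w ≠ 0
        obtain ⟨w, hwU, hπw, hw0⟩ : ∃ w, w ∈ U ∧ b.coord 1 w = 0 ∧ w ≠ 0 := by
          have hUFD : FiniteDimensional F (U : Submodule F L) := inferInstance
          let e : Basis (Fin 2) F (U : Submodule F L) := finBasisOfFinrankEq F _ hU2
          set e1 : L := (e 0 : L) with he1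
          set e2 : L := (e 1 : L) with he2
          have he1U : e1 ∈ U := (e 0).2
          have he2U : e2 ∈ U := (e 1).2
          have hlie : LinearIndependent F ![e1, e2] := by
            have := e.linearIndependent.map' (U : Submodule F L).subtype
              (Submodule.ker_subtype _)
            convert this using 1
            funext i
            fin_cases i <;> rfl
            rfl
          have hSspan : Submodule.span F ({e1, e2} : Set L) = (U : Submodule F L) := by
            apply Submodule.eq_of_le_of_finrank_eq
            · rw [Submodule.span_le]
              rintro z (rfl | rfl) <;> assumption
            · rw [finrank_span_pair_eq_two hlie, hU2]
          set c1 : F := b.coord 1 e1 with hc1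
          set c2 : F := b.coord 1 e2 with hc2
          refine ⟨c2 • e1 - c1 • e2, sub_mem (U.smul_mem _ he1U) (U.smul_mem _ he2U), ?_, ?_⟩
          · rw [map_sub, map_smul, map_smul, ← hc1, ← hc2, smul_eq_mul, smul_eq_mul]
            ring
          · intro hzero
            have hpair := (LinearIndependent.pair_iff.mp hlie) c2 (-c1)
              (by rw [neg_smul, ← sub_eq_add_neg]; exact hzero)
            -- then c1 = c2 = 0, contradicting coord 1 u0 ≠ 0
            have hc20 : c2 = 0 := hpair.1
            have hc10 : c1 = 0 := neg_eq_zero.mp hpair.2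
            obtain ⟨a, t, hat⟩ := Submodule.mem_span_pair.mp (hSspan ▸ hu0U :
              u0 ∈ Submodule.span F ({e1, e2} : Set L))
            apply hu0
            rw [← hat, map_add, map_smul, map_smul, ← hc1, ← hc2, hc10, hc20]
            simp
        set p : F := b.coord 0 w with hpdef
        set q : F := b.coord 2 w with hqdef
        have hwexp : w = p • x + q • h := by
          have := hexp w
          rwa [hπw, zero_smul, add_zero, ← hpdef, ← hqdef] at this
        by_cases hq : q = 0
        · exfalso
          have hp : p ≠ 0 := by
            intro hp
            apply hw0
            rw [hwexp, hp, hq, zero_smul, zero_smul, add_zero]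
          have hxU : x ∈ U := by
            have := U.smul_mem p⁻¹ hwU
            rwa [hwexp, hq, zero_smul, add_zero, smul_smul, inv_mul_cancel₀ hp, one_smul] at this
          have hbrx : ⁅u', x⁆ = (2 * s) • x + (-1 : F) • h := by
            rw [hu'exp]
            simp only [add_lie, smul_lie, lie_self, smul_zero, zero_add, hyx, hhx]
            module
          have hhU : h ∈ U := by
            have hmem : ⁅u', x⁆ ∈ U := U.lie_mem hu'U hxU
            have : h = (2 * s) • x - ⁅u', x⁆ := by rw [hbrx]; module
            rw [this]
            exact sub_mem (U.smul_mem _ hxU) hmem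
          have hyU : y ∈ U := by
            have : y = u' - r • x - s • h := by rw [hu'exp]; module
            rw [this]
            exact sub_mem (sub_mem hu'U (U.smul_mem _ hxU)) (U.smul_mem _ hhU)
          have htop : (U : Submodule F L) = ⊤ := by
            rw [eq_top_iff, ← hspan, Submodule.span_le]
            rintro z (rfl | rfl | rfl) <;> assumption
          rw [htop, finrank_top, hdim] at hU2
          omega
        · right
          set β : F := q⁻¹ * p with hβdef
          set w' : L := q⁻¹ • w with hw'def
          have hw'U : w' ∈ U := U.smul_mem _ hwU
          have hw'exp : w' = β • x + h := by
            rw [hw'def, hwexp, smul_add, smul_smul, smul_smul, inv_mul_cancel₀ hq, one_smul,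
              hβdef]
          have hbr : ⁅u', w'⁆ = (2 * s * β - 2 * r) • x + (2 : F) • y + (-β) • h := by
            rw [hu'exp, hw'exp]
            simp only [add_lie, lie_add, smul_lie, lie_smul, lie_self, smul_zero, zero_add,
              add_zero, hhx, hhy, hxy, hyx, hyh, hxh]
            module
          set d : L := ⁅u', w'⁆ - (2 : F) • u' with hddef
          have hdU : d ∈ U := sub_mem (U.lie_mem hu'U hw'U) (U.smul_mem _ hu'U)
          have hdexp : d = (2 * s * β - 4 * r) • x + (0 : F) • y + (-β - 2 * s) • h := by
            rw [hddef, hbr, hu'exp]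
            module
          have hw'0 : w' ≠ 0 := by
            intro hzero
            have : b.coord 2 w' = 0 := by rw [hzero, map_zero]
            rw [hw'exp, map_add, map_smul, c2x, c2h, smul_eq_mul, mul_zero, zero_add] at this
            exact one_ne_zero this
          have hliuw : LinearIndependent F ![u', w'] := by
            rw [LinearIndependent.pair_iff]
            intro a t hat
            have ha : a = 0 := by
              have hπw' : b.coord 1 w' = 0 := by
                rw [hw'def, map_smul, hπw, smul_eq_mul, mul_zero]
              have := congrArg (b.coord 1) hat
              simp only [map_add, map_smul, map_zero, smul_eq_mul, hπu', hπw',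
                mul_one, mul_zero, add_zero] at this
              exact this
            refine ⟨ha, ?_⟩
            rw [ha, zero_smul, zero_add] at hat
            exact (smul_eq_zero.mp hat).resolve_right hw'0
          have hspan_uw : Submodule.span F ({u', w'} : Set L) = (U : Submodule F L) := by
            apply Submodule.eq_of_le_of_finrank_eq
            · rw [Submodule.span_le]
              rintro z (rfl | rfl) <;> assumption
            · rw [finrank_span_pair_eq_two hliuw, hU2]
          obtain ⟨a, t, hat⟩ := Submodule.mem_span_pair.mp
            (hspan_uw ▸ hdU : d ∈ Submodule.span F ({u', w'} : Set L))
          -- compute coords of d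
          have hd0 : b.coord 0 d = 2 * s * β - 4 * r := by
            rw [hdexp]; simp [map_add, map_smul, c0x, c0y, c0h]
          have hd1 : b.coord 1 d = 0 := by
            rw [hdexp]; simp [map_add, map_smul, c1x, c1y, c1h]
          have hd2 : b.coord 2 d = -β - 2 * s := by
            rw [hdexp]; simp [map_add, map_smul, c2x, c2y, c2h]
          have hπw' : b.coord 1 w' = 0 := by
            rw [hw'def, map_smul, hπw, smul_eq_mul, mul_zero]
          have hw'0c : b.coord 0 w' = β := by
            rw [hw'exp]; simp [map_add, map_smul, c0x, c0h]
          have hw'2c : b.coord 2 w' = 1 := by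
            rw [hw'exp]; simp [map_add, map_smul, c2x, c2h]
          have ha0 : a = 0 := by
            have := congrArg (b.coord 1) hat
            simp only [map_add, map_smul, smul_eq_mul, hπu', hπw', hd1,
              mul_one, mul_zero, add_zero] at this
            exact this
          have ht2 : t = -β - 2 * s := by
            have := congrArg (b.coord 2) hat
            simp only [map_add, map_smul, smul_eq_mul, hw'2c, hd2, ha0,
              mul_one, zero_mul, zero_add] at this
            exact this
          have ht0 : t * β = 2 * s * β - 4 * r := by
            have := congrArg (b.coord 0) hat
            simp only [map_add, map_smul, smul_eq_mul, hw'0c, hd0, ha0,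
              zero_mul, zero_add] at this
            exact this
          have hr : r = s * β + β ^ 2 / 4 := by
            rw [ht2] at ht0
            have h4r : 4 * r = 4 * (s * β) + β ^ 2 := by linear_combination ht0
            field_simp
            linear_combination h4r
          refine ⟨β, ?_⟩
          have hmem1 : h + β • x ∈ U := by
            have : h + β • x = w' := by rw [hw'exp]; module
            rw [this]; exact hw'U
          have hmem2 : y + (β ^ 2 / 4) • x ∈ U := by
            have : y + (β ^ 2 / 4) • x = u' - s • w' := by
              rw [hu'exp, hw'exp, hr]; module
            rw [this]
            exact sub_mem hu'U (U.smul_mem _ hw'U)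
          symm
          apply Submodule.eq_of_le_of_finrank_eq
          · rw [Submodule.span_le]
            rintro z (rfl | rfl) <;> assumption
          · rw [hfrBα β, hU2]
    · rintro (hU' | ⟨α, hU'⟩)
      · rw [hUfr, hU', hfrB]
      · rw [hUfr, hU', hfrBα α]
  refine ⟨hmain, ?_⟩
  -- counting
  intro q hq hcardF
  have hclB : ∀ u ∈ Submodule.span F ({x, h} : Set L), ∀ v ∈ Submodule.span F ({x, h} : Set L),
      ⁅u, v⁆ ∈ Submodule.span F ({x, h} : Set L) := by
    apply lie_span_pair_closed
    rw [hxh]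
    exact Submodule.smul_mem _ _ (Submodule.subset_span (Set.mem_insert _ _))
  have hclBα : ∀ α : F, ∀ u ∈ Submodule.span F ({h + α • x, y + (α ^ 2 / 4) • x} : Set L),
      ∀ v ∈ Submodule.span F ({h + α • x, y + (α ^ 2 / 4) • x} : Set L),
      ⁅u, v⁆ ∈ Submodule.span F ({h + α • x, y + (α ^ 2 / 4) • x} : Set L) := by
    intro α
    apply lie_span_pair_closed
    have hbr : ⁅h + α • x, y + (α ^ 2 / 4) • x⁆ =
        α • (h + α • x) + (-2 : F) • (y + (α ^ 2 / 4) • x) := by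
      have h4δ : (4 : F) * (α ^ 2 / 4) = α ^ 2 := by field_simp
      simp only [lie_add, add_lie, smul_lie, lie_smul, lie_self, smul_zero, zero_add,
        add_zero, hhx, hhy, hxy]
      match_scalars <;> field_simp <;> ring
    rw [hbr]
    exact Submodule.add_mem _
      (Submodule.smul_mem _ _ (Submodule.subset_span (Set.mem_insert _ _)))
      (Submodule.smul_mem _ _ (Submodule.subset_span (Set.mem_insert_of_mem _ rfl)))
  let B0 : LieSubalgebra F L :=
    { Submodule.span F ({x, h} : Set L) with lie_mem' := fun {u v} hu hv => hclB u hu v hv }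
  let Bα : F → LieSubalgebra F L := fun α =>
    { Submodule.span F ({h + α • x, y + (α ^ 2 / 4) • x} : Set L) with
      lie_mem' := fun {u v} hu hv => hclBα α u hu v hv }
  have hB0sub : (B0 : Submodule F L) = Submodule.span F ({x, h} : Set L) := rfl
  have hBαsub : ∀ α, (Bα α : Submodule F L) =
      Submodule.span F ({h + α • x, y + (α ^ 2 / 4) • x} : Set L) := fun _ => rfl
  -- distinctness
  have hπspanB : ∀ z ∈ Submodule.span F ({x, h} : Set L), b.coord 1 z = 0 := by
    intro z hz
    have : Submodule.span F ({x, h} : Set L) ≤ LinearMap.ker (b.coord 1) := by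
      rw [Submodule.span_le]
      rintro z' (rfl | rfl) <;> simp [LinearMap.mem_ker, c1x, c1h]
    exact this hz
  have hne : ∀ α : F, Submodule.span F ({x, h} : Set L) ≠
      Submodule.span F ({h + α • x, y + (α ^ 2 / 4) • x} : Set L) := by
    intro α hEq
    have hmem : y + (α ^ 2 / 4) • x ∈ Submodule.span F ({x, h} : Set L) := by
      rw [hEq]
      exact Submodule.subset_span (Set.mem_insert_of_mem _ rfl)
    have := hπspanB _ hmem
    rw [map_add, map_smul, c1y, c1x, smul_eq_mul, mul_zero, add_zero] at this
    exact one_ne_zero this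
  have hinj : ∀ α γ : F, Submodule.span F ({h + α • x, y + (α ^ 2 / 4) • x} : Set L) =
      Submodule.span F ({h + γ • x, y + (γ ^ 2 / 4) • x} : Set L) → α = γ := by
    intro α γ hEq
    have hmem : h + α • x ∈ Submodule.span F ({h + γ • x, y + (γ ^ 2 / 4) • x} : Set L) := by
      rw [← hEq]
      exact Submodule.subset_span (Set.mem_insert _ _)
    obtain ⟨a, t, hat⟩ := Submodule.mem_span_pair.mp hmem
    have h1 : t = 0 := by
      have := congrArg (b.coord 1) hat
      simp [map_add, map_smul, c1x, c1y, c1h] at this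
      exact this
    have h2 : a = 1 := by
      have := congrArg (b.coord 2) hat
      simp [map_add, map_smul, c2x, c2y, c2h] at this
      exact this
    have h0 := congrArg (b.coord 0) hat
    simp [map_add, map_smul, c0x, c0y, c0h, h1, h2] at h0
    exact h0.symm
  -- the bijection
  have hqne : q ≠ 0 := by
    rintro rfl
    simp [Nat.odd_iff] at hq
  have hFfin : Finite F := Nat.finite_of_card_ne_zero (by rw [hcardF]; exact hqne)
  let f : Option F → {U : LieSubalgebra F L // finrank F U = 2} := fun o =>
    match o with
    | none => ⟨B0, (hmain B0).mpr (Or.inl hB0sub)⟩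
    | some α => ⟨Bα α, (hmain (Bα α)).mpr (Or.inr ⟨α, hBαsub α⟩)⟩
  have hfbij : Function.Bijective f := by
    constructor
    · rintro (_ | α) (_ | γ) hfeq <;> simp only [f, Subtype.mk.injEq] at hfeq
      · rfl
      · exact absurd (congrArg (fun W : LieSubalgebra F L => (W : Submodule F L)) hfeq)
          (hne γ)
      · exact absurd (congrArg (fun W : LieSubalgebra F L => (W : Submodule F L)) hfeq).symm
          (hne α)
      · exact congrArg _ (hinj α γ
          (congrArg (fun W : LieSubalgebra F L => (W : Submodule F L)) hfeq))
    · rintro ⟨U, hU2⟩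
      rcases (hmain U).mp hU2 with hU' | ⟨α, hU'⟩
      · refine ⟨none, ?_⟩
        simp only [f, Subtype.mk.injEq]
        exact ((LieSubalgebra.toSubmodule_inj _ _).mp (hB0sub.trans hU'.symm))
      · refine ⟨some α, ?_⟩
        simp only [f, Subtype.mk.injEq]
        exact ((LieSubalgebra.toSubmodule_inj _ _).mp ((hBαsub α).trans hU'.symm))
  calc Nat.card {U : LieSubalgebra F L // finrank F U = 2}
      = Nat.card (Option F) := (Nat.card_congr (Equiv.ofBijective f hfbij)).symm
    _ = Nat.card F + 1 := Finite.card_option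
    _ = q + 1 := by rw [hcardF]
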